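/- arXiv:1305.5311 — 6 statements merged into one kernel-verified Lean document; each statement's English description precedes it below -/
import Mathlib

section
/- The (2n+m)×(2n+m) matrix N = [[A, 0, B], [Q, −I_n, S], [Sᵀ, 0, R]] is singular if and only if at least one of the two matrices R and A − B R† Sᵀ is singular, where † denotes the Moore–Penrose pseudoinverse. -/
open Matrix

-- The Moore–Penrose pseudoinverse of a real matrix, characterised by the four
-- Penrose equations (it exists and is unique for every real matrix).
open Classical in
noncomputable def mpinv {α β : Type*} [Fintype α] [Fintype β]
    (M : Matrix α β ℝ) : Matrix β α ℝ :=
  if h : ∃ P : Matrix β α ℝ,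
      M * P * M = M ∧ P * M * P = P ∧ (M * P)ᵀ = M * P ∧ (P * M)ᵀ = P * M
  then h.choose else 0

/-- `R_X = R + BᵀXB`. -/
noncomputable def RX {ι κ : Type*} [Fintype ι] [Fintype κ]
    (R : Matrix κ κ ℝ) (B : Matrix ι κ ℝ) (X : Matrix ι ι ℝ) : Matrix κ κ ℝ :=
  R + Bᵀ * X * B

/-- `S_X = AᵀXB + S`. -/
noncomputable def SX {ι κ : Type*} [Fintype ι] [Fintype κ]
    (A : Matrix ι ι ℝ) (B S : Matrix ι κ ℝ) (X : Matrix ι ι ℝ) : Matrix ι κ ℝ :=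
  Aᵀ * X * B + S

/-- `K_X = R_X† S_Xᵀ`. -/
noncomputable def KX {ι κ : Type*} [Fintype ι] [Fintype κ]
    (A : Matrix ι ι ℝ) (B S : Matrix ι κ ℝ) (R : Matrix κ κ ℝ) (X : Matrix ι ι ℝ) :
    Matrix κ ι ℝ :=
  mpinv (RX R B X) * (SX A B S X)ᵀ

/-- The closed-loop matrix `A_X = A - B K_X`. -/
noncomputable def AX {ι κ : Type*} [Fintype ι] [Fintype κ]
    (A : Matrix ι ι ℝ) (B S : Matrix ι κ ℝ) (R : Matrix κ κ ℝ) (X : Matrix ι ι ℝ) :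
    Matrix ι ι ℝ :=
  A - B * KX A B S R X

/-- The kernel condition `ker R_X ⊆ ker S_X`. -/
def KerCond {ι κ : Type*} [Fintype ι] [Fintype κ]
    (A : Matrix ι ι ℝ) (B S : Matrix ι κ ℝ) (R : Matrix κ κ ℝ) (X : Matrix ι ι ℝ) : Prop :=
  ∀ v : κ → ℝ, (RX R B X).mulVec v = 0 → (SX A B S X).mulVec v = 0

/-- The Riccati operator `𝔇(X) = X - AᵀXA + S_X R_X† S_Xᵀ - Q`. -/
noncomputable def DOp {ι κ : Type*} [Fintype ι] [Fintype κ]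
    (A Q : Matrix ι ι ℝ) (B S : Matrix ι κ ℝ) (R : Matrix κ κ ℝ) (X : Matrix ι ι ℝ) :
    Matrix ι ι ℝ :=
  X - Aᵀ * X * A + SX A B S X * mpinv (RX R B X) * (SX A B S X)ᵀ - Q

/-- The Riccati map `ℛ(X) = AᵀXA - S_X R_X† S_Xᵀ + Q`. -/
noncomputable def Ricc {ι κ : Type*} [Fintype ι] [Fintype κ]
    (A Q : Matrix ι ι ℝ) (B S : Matrix ι κ ℝ) (R : Matrix κ κ ℝ) (X : Matrix ι ι ℝ) :
    Matrix ι ι ℝ :=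
  Aᵀ * X * A - SX A B S X * mpinv (RX R B X) * (SX A B S X)ᵀ + Q

/-- `X` is a symmetric solution of CGDARE(Σ): it is symmetric, satisfies the GDARE and
the kernel condition `ker R_X ⊆ ker S_X`. -/
def IsCGDARESolution {ι κ : Type*} [Fintype ι] [Fintype κ]
    (A Q : Matrix ι ι ℝ) (B S : Matrix ι κ ℝ) (R : Matrix κ κ ℝ) (X : Matrix ι ι ℝ) : Prop :=
  Xᵀ = X ∧ X = Ricc A Q B S R X ∧ KerCond A B S R X

/-- The matrix `N = [[A, 0, B], [Q, -I, S], [Sᵀ, 0, R]]` of the extended symplectic pencil. -/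
noncomputable def Nmat {n m : ℕ} (A Q : Matrix (Fin n) (Fin n) ℝ)
    (B S : Matrix (Fin n) (Fin m) ℝ) (R : Matrix (Fin m) (Fin m) ℝ) :
    Matrix (Fin n ⊕ (Fin n ⊕ Fin m)) (Fin n ⊕ (Fin n ⊕ Fin m)) ℝ :=
  fromBlocks A (fromCols 0 B) (fromRows Q Sᵀ) (fromBlocks (-1) S 0 R)

/-- The matrix `M = [[I, 0, 0], [0, -Aᵀ, 0], [0, -Bᵀ, 0]]` of the extended symplectic pencil. -/
noncomputable def Mmat {n m : ℕ} (A : Matrix (Fin n) (Fin n) ℝ)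
    (B : Matrix (Fin n) (Fin m) ℝ) :
    Matrix (Fin n ⊕ (Fin n ⊕ Fin m)) (Fin n ⊕ (Fin n ⊕ Fin m)) ℝ :=
  fromBlocks 1 0 0 (fromBlocks (-Aᵀ) 0 (-Bᵀ) 0)

lemma mpinv_of_inv {k : ℕ} (R : Matrix (Fin k) (Fin k) ℝ) (hR : IsUnit R.det) :
    mpinv R = R⁻¹ := by
  have hex : ∃ P : Matrix (Fin k) (Fin k) ℝ,
      R * P * R = R ∧ P * R * P = P ∧ (R * P)ᵀ = R * P ∧ (P * R)ᵀ = P * R := by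
    refine ⟨R⁻¹, ?_, ?_, ?_, ?_⟩ <;>
      simp [Matrix.mul_nonsing_inv _ hR, Matrix.nonsing_inv_mul _ hR]
  rw [mpinv, dif_pos hex]
  have h1 := hex.choose_spec.1
  have := congrArg (fun X => R⁻¹ * X * R⁻¹) h1
  simpa [Matrix.mul_assoc, Matrix.nonsing_inv_mul_cancel_left _ _ hR,
    Matrix.mul_nonsing_inv_cancel_right _ _ hR] using this

lemma ker_RS {n m : ℕ} {Q : Matrix (Fin n) (Fin n) ℝ} {S : Matrix (Fin n) (Fin m) ℝ}
    {R : Matrix (Fin m) (Fin m) ℝ} (hPi : (fromBlocks Q S Sᵀ R).PosSemidef)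
    {v : Fin m → ℝ} (hv : R *ᵥ v = 0) : S *ᵥ v = 0 := by
  set w : Fin n ⊕ Fin m → ℝ := Sum.elim 0 v with hw
  have h1 : (fromBlocks Q S Sᵀ R) *ᵥ w = Sum.elim (S *ᵥ v) 0 := by
    rw [hw, fromBlocks_mulVec]
    simp [hv]
  have h2 : star w ⬝ᵥ (fromBlocks Q S Sᵀ R) *ᵥ w = 0 := by
    rw [h1, hw]
    simp [sumElim_dotProduct_sumElim]
  have h3 := (hPi.dotProduct_mulVec_zero_iff w).mp h2
  rw [h1] at h3
  funext i
  exact congrFun h3 (Sum.inl i)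

def reidx (n m : ℕ) : (Fin n ⊕ Fin m) ⊕ Fin n ≃ Fin n ⊕ (Fin n ⊕ Fin m) where
  toFun := Sum.elim (Sum.elim Sum.inl (fun j => Sum.inr (Sum.inr j))) (fun i => Sum.inr (Sum.inl i))
  invFun := Sum.elim (fun i => Sum.inl (Sum.inl i)) (Sum.elim Sum.inr (fun j => Sum.inl (Sum.inr j)))
  left_inv := by rintro ((i|j)|i) <;> rfl
  right_inv := by rintro (i|(i|j)) <;> rfl

lemma Nmat_submatrix {n m : ℕ} (A Q : Matrix (Fin n) (Fin n) ℝ)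
    (B S : Matrix (Fin n) (Fin m) ℝ) (R : Matrix (Fin m) (Fin m) ℝ) :
    (Nmat A Q B S R).submatrix (reidx n m) (reidx n m) =
      fromBlocks (fromBlocks A B Sᵀ R) 0 (fromCols Q S) (-1) := by
  ext i j
  rcases i with (i|i)|i <;> rcases j with (j|j)|j <;>
    simp [Nmat, reidx, fromBlocks, fromCols]

lemma Nmat_det {n m : ℕ} (A Q : Matrix (Fin n) (Fin n) ℝ)
    (B S : Matrix (Fin n) (Fin m) ℝ) (R : Matrix (Fin m) (Fin m) ℝ) :
    (Nmat A Q B S R).det = (fromBlocks A B Sᵀ R).det * (-1 : ℝ) ^ n := by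
  rw [← det_submatrix_equiv_self (reidx n m), Nmat_submatrix, det_fromBlocks_zero₁₂]
  congr 1
  simp [det_neg]


/-- `N` is singular iff `R` or `A - B R† Sᵀ` is singular. -/
theorem stmt_1 {n m : ℕ} (hn : 0 < n) (hm : 0 < m)
    (A Q : Matrix (Fin n) (Fin n) ℝ) (B S : Matrix (Fin n) (Fin m) ℝ)
    (R : Matrix (Fin m) (Fin m) ℝ)
    (hPi : (fromBlocks Q S Sᵀ R).PosSemidef) :
    (Nmat A Q B S R).det = 0 ↔ R.det = 0 ∨ (A - B * mpinv R * Sᵀ).det = 0 := by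
  have hdet0 : (Nmat A Q B S R).det = 0 ↔ (fromBlocks A B Sᵀ R).det = 0 := by
    rw [Nmat_det]
    constructor
    · intro h
      rcases mul_eq_zero.mp h with h | h
      · exact h
      · exact absurd h (by positivity)
    · intro h; rw [h, zero_mul]
  rw [hdet0]
  by_cases hR : R.det = 0
  · constructor
    · intro _; exact Or.inl hR
    · intro _
      obtain ⟨v, hv0, hv⟩ := exists_mulVec_eq_zero_iff.mpr hR
      have hRsym : Rᵀ = R := by
        ext i j
        have h := congrFun (congrFun hPi.1 (Sum.inr i)) (Sum.inr j)
        simpa [conjTranspose_apply, fromBlocks] using h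
      have hSv : S *ᵥ v = 0 := ker_RS hPi hv
      apply exists_vecMul_eq_zero_iff.mp
      refine ⟨Sum.elim 0 v, ?_, ?_⟩
      · intro h
        exact hv0 (funext fun j => congrFun h (Sum.inr j))
      · rw [vecMul_fromBlocks]
        have h1 : v ᵥ* Sᵀ = 0 := by rw [vecMul_transpose, hSv]
        have h2 : v ᵥ* R = 0 := by
          rw [← hRsym, vecMul_transpose, hv]
        simp [h1, h2]
  · have hu : IsUnit R.det := isUnit_iff_ne_zero.mpr hR
    haveI := R.invertibleOfIsUnitDet hu
    rw [det_fromBlocks₂₂, invOf_eq_nonsing_inv, mpinv_of_inv R hu, mul_eq_zero]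
end

section
/- Let X be a symmetric solution of CGDARE(Σ). Then there exist invertible matrices U_X, V_X ∈ ℝ^{(2n+m)×(2n+m)} such that U_X M V_X = [[I_n, 0, 0], [0, A_Xᵀ, 0], [0, Bᵀ, 0]] and U_X N V_X = [[A_X, 0, B], [0, I_n, 0], [0, 0, R_X]] (equivalently, U_X (N − z M) V_X = [[A_X − z I_n, 0, B], [0, I_n − z A_Xᵀ, 0], [0, −z Bᵀ, R_X]] for every scalar z). -/
open Matrix

/-! ### Auxiliary lemmas for `stmt_2` -/

/-- The four Penrose equations. -/
def IsPenrose {α β : Type*} [Fintype α] [Fintype β] (M : Matrix α β ℝ) (P : Matrix β α ℝ) : Prop :=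
  M * P * M = M ∧ P * M * P = P ∧ (M * P)ᵀ = M * P ∧ (P * M)ᵀ = P * M

/-- Every real symmetric matrix has a Moore–Penrose pseudoinverse (via the spectral theorem). -/
lemma penrose_exists_of_symm {ι : Type*} [Fintype ι] [DecidableEq ι]
    (M : Matrix ι ι ℝ) (hM : Mᵀ = M) : ∃ P, IsPenrose M P := by
  have hH : M.IsHermitian := by
    ext i j
    simp only [conjTranspose_apply, star_trivial]
    exact congrFun (congrFun hM j) i |>.symm ▸ rfl
  set V : Matrix ι ι ℝ := (hH.eigenvectorUnitary : Matrix ι ι ℝ) with hV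
  have hV1 : star V * V = 1 := Matrix.mem_unitaryGroup_iff'.mp hH.eigenvectorUnitary.2
  set e : ι → ℝ := RCLike.ofReal ∘ hH.eigenvalues with he
  have hMe : M = V * diagonal e * star V := hH.spectral_theorem
  set f : ι → ℝ := fun i => (e i)⁻¹ with hf
  have key : ∀ a b : ι → ℝ, (V * diagonal a * star V) * (V * diagonal b * star V)
      = V * diagonal (fun i => a i * b i) * star V := by
    intro a b
    simp only [Matrix.mul_assoc]
    rw [← Matrix.mul_assoc (star V) V, hV1, Matrix.one_mul,
      ← Matrix.mul_assoc (diagonal a), diagonal_mul_diagonal]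
  have hsymm : ∀ a : ι → ℝ, (V * diagonal a * star V)ᵀ = V * diagonal a * star V := by
    intro a
    have h1 : (V * diagonal a * star V).IsHermitian := by
      rw [Matrix.star_eq_conjTranspose]
      exact Matrix.isHermitian_mul_mul_conjTranspose V (Matrix.isHermitian_diagonal _)
    ext i j
    simp only [transpose_apply]
    have := congrFun (congrFun h1 i) j
    simpa [conjTranspose_apply] using this
  refine ⟨V * diagonal f * star V, ?_, ?_, ?_, ?_⟩
  · rw [hMe, key, key]
    congr 2
    funext i
    by_cases h : e i = 0 <;> simp [hf, h] <;> field_simp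
  · rw [hMe, key, key]
    congr 2
    funext i
    by_cases h : e i = 0 <;> simp [hf, h] <;> field_simp
  · rw [hMe, key]; exact hsymm _
  · rw [hMe, key]; exact hsymm _

/-- Uniqueness of the Moore–Penrose pseudoinverse. -/
lemma penrose_unique {α β : Type*} [Fintype α] [Fintype β] {M : Matrix α β ℝ}
    {P P' : Matrix β α ℝ} (hP : IsPenrose M P) (hP' : IsPenrose M P') : P = P' := by
  obtain ⟨e1, e2, e3, e4⟩ := hP
  obtain ⟨f1, f2, f3, f4⟩ := hP'
  have c1 : P = P * M * P' := by
    calc P = P * M * P := e2.symm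
    _ = P * (M * P)ᵀ := by rw [e3, Matrix.mul_assoc]
    _ = P * (M * P' * M * P)ᵀ := by rw [f1]
    _ = P * ((M * P') * (M * P))ᵀ := by rw [Matrix.mul_assoc (M * P') M P]
    _ = P * ((M * P)ᵀ * (M * P')ᵀ) := by rw [Matrix.transpose_mul]
    _ = P * ((M * P) * (M * P')) := by rw [e3, f3]
    _ = (P * M * P) * (M * P') := by simp only [Matrix.mul_assoc]
    _ = P * (M * P') := by rw [e2]
    _ = P * M * P' := by rw [Matrix.mul_assoc]
  have c2 : P' = P * M * P' := by
    calc P' = P' * M * P' := f2.symm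
    _ = (P' * M)ᵀ * P' := by rw [f4]
    _ = (P' * (M * P * M))ᵀ * P' := by rw [e1]
    _ = ((P' * M) * (P * M))ᵀ * P' := by simp only [Matrix.mul_assoc]
    _ = ((P * M)ᵀ * (P' * M)ᵀ) * P' := by rw [Matrix.transpose_mul]
    _ = ((P * M) * (P' * M)) * P' := by rw [e4, f4]
    _ = (P * M) * (P' * M * P') := by simp only [Matrix.mul_assoc]
    _ = (P * M) * P' := by rw [f2]
    _ = P * M * P' := by rw [Matrix.mul_assoc]
  rw [c1, ← c2]

lemma mpinv_isPenrose_of_exists {α β : Type*} [Fintype α] [Fintype β] {M : Matrix α β ℝ}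
    (h : ∃ P, IsPenrose M P) : IsPenrose M (mpinv M) := by
  have h' : ∃ P : Matrix β α ℝ,
      M * P * M = M ∧ P * M * P = P ∧ (M * P)ᵀ = M * P ∧ (P * M)ᵀ = P * M := h
  rw [mpinv, dif_pos h']
  exact h'.choose_spec

lemma mpinv_isPenrose {ι : Type*} [Fintype ι] [DecidableEq ι] {M : Matrix ι ι ℝ}
    (hM : Mᵀ = M) : IsPenrose M (mpinv M) :=
  mpinv_isPenrose_of_exists (penrose_exists_of_symm M hM)

lemma mpinv_transpose {ι : Type*} [Fintype ι] [DecidableEq ι] {M : Matrix ι ι ℝ}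
    (hM : Mᵀ = M) : (mpinv M)ᵀ = mpinv M := by
  obtain ⟨e1, e2, e3, e4⟩ := mpinv_isPenrose hM
  set P := mpinv M with hPdef
  have a1 : M * Pᵀ * M = M := by
    have := congrArg Matrix.transpose e1
    rw [Matrix.transpose_mul, Matrix.transpose_mul, hM] at this
    rw [Matrix.mul_assoc]
    exact this
  have a2 : Pᵀ * M * Pᵀ = Pᵀ := by
    have := congrArg Matrix.transpose e2
    rw [Matrix.transpose_mul, Matrix.transpose_mul, hM] at this
    rw [Matrix.mul_assoc]
    exact this
  have a3 : (M * Pᵀ)ᵀ = M * Pᵀ := by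
    calc (M * Pᵀ)ᵀ = P * Mᵀ := by rw [Matrix.transpose_mul, Matrix.transpose_transpose]
    _ = P * M := by rw [hM]
    _ = (P * M)ᵀ := e4.symm
    _ = Mᵀ * Pᵀ := by rw [Matrix.transpose_mul]
    _ = M * Pᵀ := by rw [hM]
  have a4 : (Pᵀ * M)ᵀ = Pᵀ * M := by
    calc (Pᵀ * M)ᵀ = Mᵀ * P := by rw [Matrix.transpose_mul, Matrix.transpose_transpose]
    _ = M * P := by rw [hM]
    _ = (M * P)ᵀ := e3.symm
    _ = Pᵀ * Mᵀ := by rw [Matrix.transpose_mul]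
    _ = Pᵀ * M := by rw [hM]
  exact penrose_unique ⟨a1, a2, a3, a4⟩ ⟨e1, e2, e3, e4⟩

lemma RX_transpose {ι κ : Type*} [Fintype ι] [Fintype κ]
    {R : Matrix κ κ ℝ} {B : Matrix ι κ ℝ} {X : Matrix ι ι ℝ}
    (hXs : Xᵀ = X) (hRs : Rᵀ = R) : (RX R B X)ᵀ = RX R B X := by
  simp [RX, Matrix.transpose_add, Matrix.transpose_mul, hXs, hRs, Matrix.mul_assoc]

/-- The key consequence of the kernel condition: `R_X K_X = S_Xᵀ`. -/
lemma RX_mul_KX {ι κ : Type*} [Fintype ι] [Fintype κ] [DecidableEq κ]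
    {A : Matrix ι ι ℝ} {B S : Matrix ι κ ℝ} {R : Matrix κ κ ℝ} {X : Matrix ι ι ℝ}
    (hXs : Xᵀ = X) (hRs : Rᵀ = R) (hker : KerCond A B S R X) :
    RX R B X * KX A B S R X = (SX A B S X)ᵀ := by
  have hRxs : (RX R B X)ᵀ = RX R B X := RX_transpose hXs hRs
  obtain ⟨p1, p2, p3, p4⟩ := mpinv_isPenrose hRxs
  have hPs : (mpinv (RX R B X))ᵀ = mpinv (RX R B X) := mpinv_transpose hRxs
  set Rx := RX R B X with hRx
  set Sx := SX A B S X with hSx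
  set P := mpinv Rx with hP
  have h0 : Rx * (1 - P * Rx) = 0 := by
    rw [Matrix.mul_sub, Matrix.mul_one, ← Matrix.mul_assoc, p1, sub_self]
  have hS0 : Sx * (1 - P * Rx) = 0 := by
    ext i j
    have hcol : Rx.mulVec (fun k => (1 - P * Rx) k j) = 0 := by
      funext i'
      have := congrFun (congrFun h0 i') j
      simpa [Matrix.mulVec, Matrix.mul_apply, dotProduct] using this
    have := congrFun (hker _ hcol) i
    simpa [Matrix.mulVec, Matrix.mul_apply, dotProduct] using this
  rw [Matrix.mul_sub, Matrix.mul_one] at hS0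
  have hS1 : Sx = Sx * (P * Rx) := (sub_eq_zero.mp hS0)
  show Rx * (P * Sxᵀ) = Sxᵀ
  calc Rx * (P * Sxᵀ) = Rxᵀ * (Pᵀ * Sxᵀ) := by rw [hRxs, hPs]
  _ = (Sx * (P * Rx))ᵀ := by
      rw [Matrix.transpose_mul, Matrix.transpose_mul, Matrix.mul_assoc]
  _ = Sxᵀ := by rw [← hS1]

@[simp] lemma fromRows_add' {m₁ m₂ n : Type*} (A₁ C₁ : Matrix m₁ n ℝ) (A₂ C₂ : Matrix m₂ n ℝ) :
    fromRows A₁ A₂ + fromRows C₁ C₂ = fromRows (A₁ + C₁) (A₂ + C₂) := by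
  ext (i | i) j <;> simp

@[simp] lemma fromColumns_zero_fromRows {n₁ m₁ m₂ n₂ : Type*}
    (a : Matrix m₁ n₂ ℝ) (b : Matrix m₂ n₂ ℝ) :
    fromCols (0 : Matrix (m₁ ⊕ m₂) n₁ ℝ) (fromRows a b) = fromBlocks 0 a 0 b := by
  rw [← fromRows_zero, fromCols_fromRows_eq_fromBlocks]

lemma isUnit_blockLT {n' m' : Type*} [Fintype n'] [Fintype m'] [DecidableEq n'] [DecidableEq m']
    (C : Matrix m' n' ℝ) (D D' : Matrix m' m' ℝ) (hD : D * D' = 1) (hD' : D' * D = 1) :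
    IsUnit (fromBlocks (1 : Matrix n' n' ℝ) 0 C D) := by
  refine ⟨⟨fromBlocks 1 0 C D, fromBlocks 1 0 (-(D' * C)) D', ?_, ?_⟩, rfl⟩
  · rw [← fromBlocks_one]
    simp [fromBlocks_multiply, hD, Matrix.mul_neg, ← Matrix.mul_assoc, hD']
  · rw [← fromBlocks_one]
    simp [fromBlocks_multiply, hD', Matrix.mul_neg, ← Matrix.mul_assoc, hD]


/-- decomposition of the extended symplectic pencil induced by a symmetric
solution `X` of CGDARE(Σ). -/
theorem stmt_2 {n m : ℕ} (hn : 0 < n) (hm : 0 < m)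
    (A Q : Matrix (Fin n) (Fin n) ℝ) (B S : Matrix (Fin n) (Fin m) ℝ)
    (R : Matrix (Fin m) (Fin m) ℝ)
    (hPi : (fromBlocks Q S Sᵀ R).PosSemidef)
    (X : Matrix (Fin n) (Fin n) ℝ) (hX : IsCGDARESolution A Q B S R X) :
    ∃ U V : Matrix (Fin n ⊕ (Fin n ⊕ Fin m)) (Fin n ⊕ (Fin n ⊕ Fin m)) ℝ,
      IsUnit U ∧ IsUnit V ∧
      U * Mmat A B * V = fromBlocks 1 0 0 (fromBlocks (AX A B S R X)ᵀ 0 Bᵀ 0) ∧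
      U * Nmat A Q B S R * V =
        fromBlocks (AX A B S R X) (fromCols 0 B) 0 (fromBlocks 1 0 0 (RX R B X)) := by
  obtain ⟨hXs, hRicX, hker⟩ := hX
  have hRs : Rᵀ = R := by
    ext i j
    have := congrFun (congrFun hPi.1 (Sum.inr i)) (Sum.inr j)
    simpa using this
  have hRxs : (RX R B X)ᵀ = RX R B X := RX_transpose hXs hRs
  have hRK0 : RX R B X * KX A B S R X = (SX A B S X)ᵀ := RX_mul_KX hXs hRs hker
  have hKR0 : (KX A B S R X)ᵀ * RX R B X = SX A B S X := by
    have := congrArg Matrix.transpose hRK0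
    rwa [Matrix.transpose_mul, hRxs, Matrix.transpose_transpose] at this
  set K := KX A B S R X with hKd
  set Ax := AX A B S R X with hAxd
  have hAx : Ax = A - B * K := rfl
  have hAxT : Axᵀ = Aᵀ - Kᵀ * Bᵀ := by
    rw [hAx, Matrix.transpose_sub, Matrix.transpose_mul]
  have hSxT : (SX A B S X)ᵀ = Bᵀ * X * A + Sᵀ := by
    rw [SX, Matrix.transpose_add, Matrix.transpose_mul, Matrix.transpose_mul,
      Matrix.transpose_transpose, hXs, ← Matrix.mul_assoc]
  have hSxE : SX A B S X = Aᵀ * X * B + S := rfl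
  have hRK : (R + Bᵀ * X * B) * K = Bᵀ * X * A + Sᵀ := by
    rw [← hSxT]; exact hRK0
  have hKR : Kᵀ * (R + Bᵀ * X * B) = Aᵀ * X * B + S := by
    rw [← hSxE]; exact hKR0
  have hKmul : (Aᵀ * X * B + S) * K = SX A B S X * mpinv (RX R B X) * (SX A B S X)ᵀ := by
    rw [hKd]
    show SX A B S X * (mpinv (RX R B X) * (SX A B S X)ᵀ) = _
    rw [Matrix.mul_assoc]
  have hQ : Q = X - (Aᵀ * X * A - (Aᵀ * X * B + S) * K) := by
    rw [eq_sub_iff_add_eq, add_comm, hKmul]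
    exact hRicX.symm
  have h5 : Kᵀ * ((R + Bᵀ * X * B) * K) = Kᵀ * (Bᵀ * X * A + Sᵀ) := by rw [hRK]
  simp only [Matrix.sub_mul, Matrix.add_mul, Matrix.mul_add, Matrix.mul_sub,
    Matrix.mul_neg, Matrix.neg_mul, neg_neg, neg_one_mul, Matrix.mul_assoc] at h5 hRK hKR
  refine ⟨fromBlocks 1 0 (fromRows (Axᵀ * X) (Bᵀ * X)) (fromBlocks 1 (-Kᵀ) 0 1),
    fromBlocks 1 0 (fromRows X (-K)) (fromBlocks (-1) 0 0 1), ?_, ?_, ?_, ?_⟩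
  · refine isUnit_blockLT _ _ (fromBlocks 1 Kᵀ 0 1) ?_ ?_ <;>
      simp [fromBlocks_multiply]
  · refine isUnit_blockLT _ _ (fromBlocks (-1) 0 0 1) ?_ ?_ <;>
      simp [fromBlocks_multiply]
  · rw [Mmat, fromBlocks_multiply, fromBlocks_multiply]
    simp only [Matrix.one_mul, Matrix.mul_one, Matrix.mul_zero, Matrix.zero_mul,
      add_zero, zero_add, fromBlocks_multiply, fromBlocks_mul_fromRows, fromRows_mul]
    rw [fromBlocks_inj]
    refine ⟨rfl, rfl, ?_, ?_⟩
    · rw [fromRows_add']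
      rw [show Axᵀ * X + (-Aᵀ + -Kᵀ * -Bᵀ) * X = 0 by
          rw [hAxT]
          simp only [Matrix.add_mul, Matrix.sub_mul, Matrix.neg_mul, Matrix.mul_neg, neg_neg]
          abel,
        show Bᵀ * X + -Bᵀ * X = 0 by
          simp only [Matrix.neg_mul]; abel,
        fromRows_zero]
    · rw [fromBlocks_inj]
      refine ⟨?_, rfl, ?_, rfl⟩
      · rw [hAxT]
        simp only [Matrix.add_mul, Matrix.sub_mul, Matrix.neg_mul, Matrix.mul_neg, neg_neg,
          Matrix.mul_one]
        abel
      · simp only [Matrix.neg_mul, Matrix.mul_neg, Matrix.mul_one, neg_neg]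
  · rw [Nmat, RX, fromBlocks_multiply, fromBlocks_multiply]
    simp only [Matrix.one_mul, Matrix.mul_one, Matrix.mul_zero, Matrix.zero_mul,
      add_zero, zero_add, fromBlocks_multiply, fromBlocks_mul_fromRows, fromRows_mul,
      fromRows_mul_fromCols, fromCols_mul_fromRows, fromCols_mul_fromBlocks,
      fromBlocks_add, fromRows_add', Matrix.add_mul, mul_fromCols,
      fromRows_fromCols_eq_fromBlocks]
    rw [fromBlocks_inj]
    refine ⟨?_, rfl, ?_, ?_⟩
    · rw [hAx]
      simp [Matrix.mul_neg, sub_eq_add_neg]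
    · rw [← fromRows_zero, fromRows_ext_iff]
      constructor
      · rw [hAxT, hQ]
        simp only [Matrix.sub_mul, Matrix.add_mul, Matrix.mul_add, Matrix.mul_sub,
          Matrix.mul_neg, Matrix.neg_mul, neg_neg, neg_one_mul, Matrix.mul_assoc]
        linear_combination (norm := abel) h5
      · simp only [Matrix.add_mul, Matrix.mul_neg, Matrix.neg_mul, Matrix.mul_assoc]
        linear_combination (norm := abel) -hRK
    · simp only [fromColumns_zero_fromRows, fromBlocks_add, Matrix.neg_mul, neg_neg,
        Matrix.one_mul]
      rw [fromBlocks_inj]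
      refine ⟨by rw [zero_add], ?_, by rw [add_zero], by abel⟩
      rw [hAxT]
      simp only [Matrix.sub_mul, Matrix.add_mul, Matrix.mul_add, Matrix.mul_sub,
        Matrix.mul_neg, Matrix.neg_mul, neg_neg, neg_one_mul, Matrix.mul_assoc]
      linear_combination (norm := abel) -hKR
end

section
/- Let X be a symmetric solution of CGDARE(Σ). Then, as an identity of polynomials in z, det(N − z M) = (−1)^n · det(A_X − z I_n) · det(I_n − z A_Xᵀ) · det R_X. -/
open Matrix

section helpers
variable {R : Type*} [Ring R] {m₁ m₂ n l : Type*} [Fintype m₁] [Fintype m₂] [Fintype n]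

lemma myFromRows_add (A₁ B₁ : Matrix m₁ n R) (A₂ B₂ : Matrix m₂ n R) :
    fromRows A₁ A₂ + fromRows B₁ B₂ = fromRows (A₁ + B₁) (A₂ + B₂) := by
  ext (i|i) j <;> rfl

lemma myFromBlocks_sub {o : Type*} (A A' : Matrix n l R) (B B' : Matrix n m₁ R)
    (C C' : Matrix o l R) (D D' : Matrix o m₁ R) :
    fromBlocks A B C D - fromBlocks A' B' C' D'
      = fromBlocks (A - A') (B - B') (C - C') (D - D') := by
  ext (i|i) (j|j) <;> simp [fromBlocks]
end helpers

lemma exists_pinv {p : ℕ} (M : Matrix (Fin p) (Fin p) ℝ) (hM : Mᵀ = M) :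
    ∃ P : Matrix (Fin p) (Fin p) ℝ,
      M * P * M = M ∧ P * M * P = P ∧ (M * P)ᵀ = M * P ∧ (P * M)ᵀ = P * M := by
  have hH : M.IsHermitian := by
    rwa [Matrix.IsHermitian, conjTranspose_eq_transpose_of_trivial]
  set U : Matrix (Fin p) (Fin p) ℝ := (hH.eigenvectorUnitary : Matrix (Fin p) (Fin p) ℝ) with hU
  have hUU : star U * U = 1 := Matrix.mem_unitaryGroup_iff'.mp (hH.eigenvectorUnitary).2
  set d : Fin p → ℝ := hH.eigenvalues with hd
  have hspec : M = U * diagonal d * star U := by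
    have := hH.spectral_theorem
    simpa using this
  set e : Fin p → ℝ := fun i => if d i = 0 then 0 else (d i)⁻¹ with he
  have hmul : ∀ v w : Fin p → ℝ,
      (U * diagonal v * star U) * (U * diagonal w * star U)
        = U * diagonal (fun i => v i * w i) * star U := by
    intro v w
    have h2 : diagonal v * diagonal w = diagonal (fun i => v i * w i) := by
      rw [diagonal_mul_diagonal]
    calc (U * diagonal v * star U) * (U * diagonal w * star U)
        = U * (diagonal v * (star U * U) * diagonal w) * star U := by noncomm_ring
      _ = _ := by rw [hUU, mul_one, h2]
  have hsym : ∀ v : Fin p → ℝ, (U * diagonal v * star U)ᵀ = U * diagonal v * star U := by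
    intro v
    rw [← conjTranspose_eq_transpose_of_trivial]
    simp [conjTranspose_mul, diagonal_conjTranspose, Matrix.mul_assoc,
      star_eq_conjTranspose]
  have hded : (fun i => d i * e i * d i) = d := by
    funext i
    by_cases h : d i = 0
    · simp [he, h]
    · simp only [he, h, if_neg h]
      field_simp
  have hede : (fun i => e i * d i * e i) = e := by
    funext i
    by_cases h : d i = 0
    · simp [he, h]
    · simp only [he, h, if_neg h]
      field_simp
  refine ⟨U * diagonal e * star U, ?_, ?_, ?_, ?_⟩
  · rw [hspec, hmul, hmul, hded]
  · conv_lhs => rw [hspec]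
    rw [hmul, hmul, hede]
  · conv_lhs => rw [hspec, hmul, hsym]
    rw [hspec, hmul]
  · conv_lhs => rw [hspec, hmul, hsym]
    rw [hspec, hmul]

/-- `det (N - z M) = (-1)^n det(A_X - z I) det(I - z A_Xᵀ) det R_X`
for every scalar `z` (hence as an identity of polynomials in `z`). -/
theorem stmt_3 {n m : ℕ} (hn : 0 < n) (hm : 0 < m)
    (A Q : Matrix (Fin n) (Fin n) ℝ) (B S : Matrix (Fin n) (Fin m) ℝ)
    (R : Matrix (Fin m) (Fin m) ℝ)
    (hPi : (fromBlocks Q S Sᵀ R).PosSemidef)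
    (X : Matrix (Fin n) (Fin n) ℝ) (hX : IsCGDARESolution A Q B S R X) :
    ∀ z : ℝ,
      (Nmat A Q B S R - z • Mmat A B).det =
        (-1 : ℝ) ^ n * (AX A B S R X - z • (1 : Matrix (Fin n) (Fin n) ℝ)).det *
          ((1 : Matrix (Fin n) (Fin n) ℝ) - z • (AX A B S R X)ᵀ).det * (RX R B X).det := by
  obtain ⟨hXs, hXr, hker⟩ := hX
  have hR : Rᵀ = R := by
    have h : (fromBlocks Q S Sᵀ R)ᵀ = fromBlocks Q S Sᵀ R := by
      rw [← conjTranspose_eq_transpose_of_trivial]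
      exact hPi.1
    rw [fromBlocks_transpose] at h
    exact (fromBlocks_inj.mp h).2.2.2
  set Rx : Matrix (Fin m) (Fin m) ℝ := RX R B X with hRx
  set Sx : Matrix (Fin n) (Fin m) ℝ := SX A B S X with hSx
  set G : Matrix (Fin m) (Fin m) ℝ := mpinv Rx with hG
  set K : Matrix (Fin m) (Fin n) ℝ := KX A B S R X with hKdef
  have hKGS : K = G * Sxᵀ := rfl
  set Ax : Matrix (Fin n) (Fin n) ℝ := AX A B S R X with hAxdef
  have hAx : Ax = A - B * K := rfl
  have hRxs : Rxᵀ = Rx := by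
    rw [hRx, RX, transpose_add, transpose_mul, transpose_mul, transpose_transpose, hXs, hR,
      Matrix.mul_assoc]
  -- Penrose equation 1 for G
  have hG1 : Rx * G * Rx = Rx := by
    have hex := exists_pinv Rx hRxs
    rw [hG, mpinv, dif_pos hex]
    exact hex.choose_spec.1
  -- kernel condition in matrix form : Sx * (1 - G * Rx) = 0
  have hC0 : Rx * (1 - G * Rx) = 0 := by
    rw [Matrix.mul_sub, Matrix.mul_one, ← Matrix.mul_assoc, hG1, sub_self]
  have hSC : Sx * (1 - G * Rx) = 0 := by
    ext i j
    rw [Matrix.mul_apply]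
    have hv : Rx.mulVec (fun k => (1 - G * Rx) k j) = 0 := by
      funext k
      have h0 : (Rx * (1 - G * Rx)) k j = (0 : Matrix (Fin m) (Fin m) ℝ) k j := by rw [hC0]
      simpa [Matrix.mul_apply, Matrix.mulVec, dotProduct] using h0
    have h1 := congrFun (hker _ hv) i
    simpa [Matrix.mulVec, dotProduct, ← hSx] using h1
  have hSGR : Sx * G * Rx = Sx := by
    have := hSC
    rw [Matrix.mul_sub, Matrix.mul_one, sub_eq_zero] at this
    rw [Matrix.mul_assoc]
    exact this.symm
  have hTX : Rx * Gᵀ * Sxᵀ = Sxᵀ := by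
    have h := congrArg Matrix.transpose hSGR
    rwa [transpose_mul, transpose_mul, hRxs, ← Matrix.mul_assoc] at h
  have hRK : Rx * K = Sxᵀ := by
    rw [hKGS, ← Matrix.mul_assoc]
    calc Rx * G * Sxᵀ = Rx * G * (Rx * Gᵀ * Sxᵀ) := by rw [hTX]
      _ = Rx * G * Rx * (Gᵀ * Sxᵀ) := by
          rw [Matrix.mul_assoc (Rx * G), ← Matrix.mul_assoc Rx, ← Matrix.mul_assoc,
            ← Matrix.mul_assoc]
      _ = Rx * (Gᵀ * Sxᵀ) := by rw [hG1]
      _ = Sxᵀ := by rw [← Matrix.mul_assoc, hTX]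
  have hKR : Kᵀ * Rx = Sx := by
    have h := congrArg Matrix.transpose hRK
    rwa [transpose_mul, hRxs, transpose_transpose] at h
  have hT : Sx * K = SX A B S X * mpinv (RX R B X) * (SX A B S X)ᵀ := by
    rw [hSx, hKdef, KX, ← Matrix.mul_assoc]
  have hQ : Q = X - Aᵀ * X * A + Sx * K := by
    have h := hXr
    rw [Ricc] at h
    calc Q = (Aᵀ * X * A - SX A B S X * mpinv (RX R B X) * (SX A B S X)ᵀ + Q)
            - Aᵀ * X * A + SX A B S X * mpinv (RX R B X) * (SX A B S X)ᵀ := by abel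
      _ = X - Aᵀ * X * A + SX A B S X * mpinv (RX R B X) * (SX A B S X)ᵀ := by rw [← h]
      _ = X - Aᵀ * X * A + Sx * K := by rw [hT]
  have hS : S = Sx - Aᵀ * X * B := by
    rw [hSx, SX]
    abel
  have hSt : Sᵀ = Sxᵀ - Bᵀ * X * A := by
    rw [hS, transpose_sub, transpose_mul, transpose_mul, transpose_transpose, hXs,
      Matrix.mul_assoc]
  have hRR : R = Rx - Bᵀ * X * B := by
    rw [hRx, RX]
    abel
  intro z
  -- the transformation matrices
  set ι := Fin n ⊕ (Fin n ⊕ Fin m)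
  set U1 : Matrix ι ι ℝ := fromBlocks 1 0 (fromRows (Aᵀ * X) (Bᵀ * X)) 1 with hU1
  set U2 : Matrix ι ι ℝ := fromBlocks 1 0 0 (fromBlocks 1 (-Kᵀ) 0 1) with hU2
  set V1 : Matrix ι ι ℝ := fromBlocks 1 0 (fromRows 0 (-K)) 1 with hV1
  set V2 : Matrix ι ι ℝ := fromBlocks 1 0 (fromRows X 0) 1 with hV2
  set P0 : Matrix ι ι ℝ :=
    fromBlocks (A - z • 1) (fromCols 0 B) (fromRows Q Sᵀ)
      (fromBlocks (z • Aᵀ - 1) S (z • Bᵀ) R) with hP0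
  set P1 : Matrix ι ι ℝ :=
    fromBlocks (Ax - z • 1) (fromCols 0 B)
      (fromRows (X - Aᵀ * X * Ax) (-(Bᵀ * X * Ax)))
      (fromBlocks (z • Aᵀ - 1) S (z • Bᵀ) R) with hP1
  set P2 : Matrix ι ι ℝ :=
    fromBlocks (Ax - z • 1) (fromCols 0 B)
      (fromRows (X - z • (Aᵀ * X)) (-(z • (Bᵀ * X))))
      (fromBlocks (z • Aᵀ - 1) Sx (z • Bᵀ) Rx) with hP2
  set P3 : Matrix ι ι ℝ :=
    fromBlocks (Ax - z • 1) (fromCols 0 B) (fromRows 0 0)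
      (fromBlocks (z • Aᵀ - 1) Sx (z • Bᵀ) Rx) with hP3
  set Dm : Matrix ι ι ℝ :=
    fromBlocks (Ax - z • 1) (fromCols 0 B) (fromRows 0 0)
      (fromBlocks (z • Axᵀ - 1) 0 (z • Bᵀ) Rx) with hDm
  have hfact : Nmat A Q B S R - z • Mmat A B = P0 := by
    rw [Nmat, Mmat, fromBlocks_smul, fromBlocks_smul, myFromBlocks_sub, myFromBlocks_sub]
    rw [fromBlocks_inj]
    refine ⟨rfl, by simp, by simp, ?_⟩
    rw [fromBlocks_inj]
    refine ⟨?_, by simp, ?_, by simp⟩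
    · rw [smul_neg]
      abel
    · rw [smul_neg]
      abel
  have step1 : P0 * V1 = P1 := by
    rw [hP0, hV1, hP1, fromBlocks_multiply, fromBlocks_inj]
    refine ⟨?_, by simp, ?_, by simp⟩
    · rw [fromCols_mul_fromRows, hAx]
      simp only [Matrix.mul_smul, Matrix.smul_mul, Matrix.mul_sub, Matrix.sub_mul,
          Matrix.mul_neg, Matrix.neg_mul, Matrix.mul_zero, Matrix.zero_mul, Matrix.mul_one,
          Matrix.one_mul, Matrix.mul_assoc, smul_sub, transpose_sub, transpose_mul,
          transpose_smul, smul_neg, neg_smul, zero_add, add_zero]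
      abel
    · rw [fromBlocks_mul_fromRows, Matrix.mul_one, myFromRows_add, fromRows_inj.eq_iff]
      constructor
      · rw [hQ, hS, hAx]
        simp only [Matrix.mul_smul, Matrix.smul_mul, Matrix.mul_sub, Matrix.sub_mul,
          Matrix.mul_neg, Matrix.neg_mul, Matrix.mul_zero, Matrix.zero_mul, Matrix.mul_one,
          Matrix.one_mul, Matrix.mul_assoc, smul_sub, transpose_sub, transpose_mul,
          transpose_smul, smul_neg, neg_smul, zero_add, add_zero]
        abel
      · rw [hSt, hRR, hAx]
        simp only [Matrix.mul_smul, Matrix.smul_mul, Matrix.mul_sub, Matrix.sub_mul,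
          Matrix.mul_neg, Matrix.neg_mul, Matrix.mul_zero, Matrix.zero_mul, Matrix.mul_one,
          Matrix.one_mul, Matrix.mul_assoc, smul_sub, transpose_sub, transpose_mul,
          transpose_smul, smul_neg, neg_smul, zero_add, add_zero]
        rw [hRK]
        abel
  have step2 : U1 * P1 = P2 := by
    rw [hU1, hP1, hP2, fromBlocks_multiply, fromBlocks_inj]
    refine ⟨by simp, by simp, ?_, ?_⟩
    · rw [fromRows_mul, Matrix.one_mul, myFromRows_add, fromRows_inj.eq_iff]
      constructor
      · simp only [Matrix.mul_smul, Matrix.smul_mul, Matrix.mul_sub, Matrix.sub_mul,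
          Matrix.mul_neg, Matrix.neg_mul, Matrix.mul_zero, Matrix.zero_mul, Matrix.mul_one,
          Matrix.one_mul, Matrix.mul_assoc, smul_sub, transpose_sub, transpose_mul,
          transpose_smul, smul_neg, neg_smul, zero_add, add_zero]
        abel
      · simp only [Matrix.mul_smul, Matrix.smul_mul, Matrix.mul_sub, Matrix.sub_mul,
          Matrix.mul_neg, Matrix.neg_mul, Matrix.mul_zero, Matrix.zero_mul, Matrix.mul_one,
          Matrix.one_mul, Matrix.mul_assoc, smul_sub, transpose_sub, transpose_mul,
          transpose_smul, smul_neg, neg_smul, zero_add, add_zero]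
        abel
    · rw [fromRows_mul_fromCols, Matrix.one_mul, fromBlocks_add, fromBlocks_inj]
      refine ⟨by simp, ?_, by simp, ?_⟩
      · rw [hSx, SX]
      · rw [hRx, RX]
        abel
  have step3 : P2 * V2 = P3 := by
    rw [hP2, hV2, hP3, fromBlocks_multiply, fromBlocks_inj]
    refine ⟨?_, by simp, ?_, by simp⟩
    · rw [fromCols_mul_fromRows]
      simp
    · rw [fromBlocks_mul_fromRows, Matrix.mul_one, myFromRows_add, fromRows_inj.eq_iff]
      constructor
      · simp only [Matrix.mul_smul, Matrix.smul_mul, Matrix.mul_sub, Matrix.sub_mul,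
          Matrix.mul_neg, Matrix.neg_mul, Matrix.mul_zero, Matrix.zero_mul, Matrix.mul_one,
          Matrix.one_mul, Matrix.mul_assoc, smul_sub, transpose_sub, transpose_mul,
          transpose_smul, smul_neg, neg_smul, zero_add, add_zero]
        abel
      · simp only [Matrix.mul_smul, Matrix.smul_mul, Matrix.mul_sub, Matrix.sub_mul,
          Matrix.mul_neg, Matrix.neg_mul, Matrix.mul_zero, Matrix.zero_mul, Matrix.mul_one,
          Matrix.one_mul, Matrix.mul_assoc, smul_sub, transpose_sub, transpose_mul,
          transpose_smul, smul_neg, neg_smul, zero_add, add_zero]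
        abel
  have step4 : U2 * P3 = Dm := by
    rw [hU2, hP3, hDm, fromBlocks_multiply, fromBlocks_inj]
    refine ⟨by simp, by simp, by simp, ?_⟩
    simp only [Matrix.zero_mul, Matrix.one_mul, zero_add, add_zero]
    rw [fromBlocks_multiply, fromBlocks_inj]
    refine ⟨?_, ?_, by simp, by simp⟩
    · rw [hAx]
      simp only [Matrix.mul_smul, Matrix.smul_mul, Matrix.mul_sub, Matrix.sub_mul,
          Matrix.mul_neg, Matrix.neg_mul, Matrix.mul_zero, Matrix.zero_mul, Matrix.mul_one,
          Matrix.one_mul, Matrix.mul_assoc, smul_sub, transpose_sub, transpose_mul,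
          transpose_smul, smul_neg, neg_smul, zero_add, add_zero]
      abel
    · simp only [Matrix.mul_smul, Matrix.smul_mul, Matrix.mul_sub, Matrix.sub_mul,
          Matrix.mul_neg, Matrix.neg_mul, Matrix.mul_zero, Matrix.zero_mul, Matrix.mul_one,
          Matrix.one_mul, Matrix.mul_assoc, smul_sub, transpose_sub, transpose_mul,
          transpose_smul, smul_neg, neg_smul, zero_add, add_zero]
      rw [hKR]
      abel
  have hcomb : U2 * (U1 * ((Nmat A Q B S R - z • Mmat A B) * V1) * V2) = Dm := by
    rw [hfact, step1, step2, step3, step4]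
  have hdetU1 : U1.det = 1 := by
    rw [hU1, det_fromBlocks_zero₁₂, det_one, det_one, mul_one]
  have hdetU2 : U2.det = 1 := by
    rw [hU2, det_fromBlocks_zero₁₂, det_one, det_fromBlocks_zero₂₁, det_one, det_one]
    norm_num
  have hdetV1 : V1.det = 1 := by
    rw [hV1, det_fromBlocks_zero₁₂, det_one, det_one, mul_one]
  have hdetV2 : V2.det = 1 := by
    rw [hV2, det_fromBlocks_zero₁₂, det_one, det_one, mul_one]
  have hdet : (Nmat A Q B S R - z • Mmat A B).det = Dm.det := by
    have h := congrArg Matrix.det hcomb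
    rwa [det_mul, det_mul, det_mul, det_mul, hdetU1, hdetU2, hdetV1, hdetV2, one_mul,
      one_mul, mul_one, mul_one] at h
  rw [hdet, hDm, fromRows_zero, det_fromBlocks_zero₂₁, det_fromBlocks_zero₁₂]
  have hneg : z • Axᵀ - 1 = -((1 : Matrix (Fin n) (Fin n) ℝ) - z • Axᵀ) := by abel
  rw [hneg, det_neg, Fintype.card_fin]
  ring
end

section
/- Let X be a symmetric solution of CGDARE(Σ) such that R_X is invertible. Then the closed-loop matrix A_X is singular if and only if at least one of the two matrices R and A − B R† Sᵀ is singular. -/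
open Matrix

lemma mpinv_spec {α β : Type*} [Fintype α] [Fintype β] {M : Matrix α β ℝ}
    (h : ∃ P : Matrix β α ℝ,
      M * P * M = M ∧ P * M * P = P ∧ (M * P)ᵀ = M * P ∧ (P * M)ᵀ = P * M) :
    M * mpinv M * M = M ∧ mpinv M * M * mpinv M = mpinv M ∧
      (M * mpinv M)ᵀ = M * mpinv M ∧ (mpinv M * M)ᵀ = mpinv M * M := by
  rw [mpinv, dif_pos h]
  exact h.choose_spec

lemma exists_pinv_of_isHermitian {κ : Type*} [Fintype κ] [DecidableEq κ]
    {M : Matrix κ κ ℝ} (hM : M.IsHermitian) :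
    ∃ P : Matrix κ κ ℝ,
      M * P * M = M ∧ P * M * P = P ∧ (M * P)ᵀ = M * P ∧ (P * M)ᵀ = P * M := by
  classical
  set V : Matrix κ κ ℝ := (hM.eigenvectorUnitary : Matrix κ κ ℝ) with hV
  set d : κ → ℝ := hM.eigenvalues with hd
  have hVV : star V * V = 1 := Unitary.coe_star_mul_self _
  have hspec : M = V * diagonal d * star V := by
    have := hM.spectral_theorem
    simpa using this
  set d' : κ → ℝ := fun i => if d i = 0 then 0 else (d i)⁻¹ with hd'
  have cancel : ∀ Z : Matrix κ κ ℝ, star V * (V * Z) = Z := fun Z => by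
    rw [← Matrix.mul_assoc, hVV, Matrix.one_mul]
  have key : ∀ e f : κ → ℝ,
      (V * diagonal e * star V) * (V * diagonal f * star V)
      = V * diagonal (fun i => e i * f i) * star V := by
    intro e f
    simp only [Matrix.mul_assoc, cancel]
    rw [← Matrix.mul_assoc (diagonal e), diagonal_mul_diagonal]
  have hstar : star V = Vᵀ := by
    rw [Matrix.star_eq_conjTranspose, conjTranspose_eq_transpose_of_trivial]
  have symm : ∀ e : κ → ℝ, (V * diagonal e * star V)ᵀ = V * diagonal e * star V := by
    intro e
    simp [hstar, Matrix.transpose_mul, Matrix.diagonal_transpose, Matrix.mul_assoc]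
  refine ⟨V * diagonal d' * star V, ?_, ?_, ?_, ?_⟩
  · have h1 : (fun i => d i * d' i * d i) = d := by
      funext i
      by_cases h : d i = 0
      · simp [hd', h]
      · simp only [hd', if_neg h]
        field_simp
    conv_lhs => rw [hspec]
    simp only [key]
    rw [h1, ← hspec]
  · have h1 : (fun i => d' i * d i * d' i) = d' := by
      funext i
      by_cases h : d i = 0
      · simp [hd', h]
      · simp only [hd', if_neg h]
        field_simp
    conv_lhs => rw [hspec]
    simp only [key]
    rw [h1]
  · rw [hspec, key]; exact symm _
  · rw [hspec, key]; exact symm _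

lemma mpinv_of_isUnit {κ : Type*} [Fintype κ] [DecidableEq κ] {M : Matrix κ κ ℝ}
    (h : IsUnit M) : mpinv M = M⁻¹ := by
  have hd : IsUnit M.det := (Matrix.isUnit_iff_isUnit_det M).mp h
  have h1 : M * M⁻¹ = 1 := Matrix.mul_nonsing_inv M hd
  have h2 : M⁻¹ * M = 1 := Matrix.nonsing_inv_mul M hd
  obtain ⟨e1, _, _, _⟩ := mpinv_spec (M := M)
    ⟨M⁻¹, by rw [h1, Matrix.one_mul], by rw [h2, Matrix.one_mul],
      by rw [h1, Matrix.transpose_one], by rw [h2, Matrix.transpose_one]⟩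
  calc mpinv M = M⁻¹ * (M * mpinv M * M) * M⁻¹ := by
        simp only [Matrix.mul_assoc, h1, Matrix.mul_one]
        rw [← Matrix.mul_assoc, h2, Matrix.one_mul]
      _ = M⁻¹ := by rw [e1, Matrix.mul_assoc, h1, Matrix.mul_one]


theorem stmt_4' {n m : ℕ} (hn : 0 < n) (hm : 0 < m)
    (A Q : Matrix (Fin n) (Fin n) ℝ) (B S : Matrix (Fin n) (Fin m) ℝ)
    (R : Matrix (Fin m) (Fin m) ℝ)
    (hPi : (fromBlocks Q S Sᵀ R).PosSemidef)
    (X : Matrix (Fin n) (Fin n) ℝ) (hXsym : Xᵀ = X)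
    (hRX : IsUnit (RX R B X)) :
    (AX A B S R X).det = 0 ↔ R.det = 0 ∨ (A - B * mpinv R * Sᵀ).det = 0 := by
  classical
  -- R is symmetric
  have hRsym : Rᵀ = R := by
    have h := congrArg Matrix.toBlocks₂₂ hPi.1
    simpa [Matrix.fromBlocks_conjTranspose, Matrix.fromBlocks_transpose, Matrix.toBlocks_fromBlocks₂₂,
      Matrix.conjTranspose_eq_transpose_of_trivial] using h
  have hRherm : R.IsHermitian := by
    rwa [Matrix.IsHermitian, conjTranspose_eq_transpose_of_trivial]
  -- kernel inclusion ker R ⊆ ker S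
  have hker : ∀ v : Fin m → ℝ, R *ᵥ v = 0 → S *ᵥ v = 0 := by
    intro v hv
    have h0 : (fromBlocks Q S Sᵀ R) *ᵥ (Sum.elim 0 v) = Sum.elim (S *ᵥ v) 0 := by
      rw [Matrix.fromBlocks_mulVec]
      simp [hv]
    have hdp : star (Sum.elim (0 : Fin n → ℝ) v) ⬝ᵥ
        ((fromBlocks Q S Sᵀ R) *ᵥ (Sum.elim 0 v)) = 0 := by
      rw [h0]
      simp [dotProduct, Fintype.sum_sum_type]
    have h1 := (hPi.dotProduct_mulVec_zero_iff _).mp hdp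
    rw [h0] at h1
    funext i
    exact congrFun h1 (Sum.inl i)
  -- pseudoinverse identity for R
  obtain ⟨hP1, -, hP3, -⟩ := mpinv_spec (exists_pinv_of_isHermitian hRherm)
  have hER : (1 - R * mpinv R) * R = 0 := by
    rw [Matrix.sub_mul, Matrix.one_mul, hP1, sub_self]
  have hEsym : (1 - R * mpinv R)ᵀ = 1 - R * mpinv R := by
    rw [Matrix.transpose_sub, Matrix.transpose_one, hP3]
  have hRE : R * (1 - R * mpinv R) = 0 := by
    have h := congrArg Matrix.transpose hER
    rwa [Matrix.transpose_mul, hEsym, hRsym, Matrix.transpose_zero] at h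
  have hSE : S * (1 - R * mpinv R) = 0 := by
    ext i j
    have hcol : R *ᵥ (fun k => (1 - R * mpinv R) k j) = 0 := by
      funext l
      have h := congrFun (congrFun hRE l) j
      simpa [Matrix.mul_apply, Matrix.mulVec, dotProduct] using h
    have h := congrFun (hker _ hcol) i
    simpa [Matrix.mul_apply, Matrix.mulVec, dotProduct] using h
  have hRS : R * mpinv R * Sᵀ = Sᵀ := by
    have h := congrArg Matrix.transpose hSE
    rw [Matrix.transpose_mul, hEsym, Matrix.transpose_zero, Matrix.sub_mul,
      Matrix.one_mul, sub_eq_zero] at h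
    rw [Matrix.mul_assoc] at h ⊢
    exact h.symm
  -- invertibility of RX
  have hRXdet : IsUnit (RX R B X).det := (Matrix.isUnit_iff_isUnit_det _).mp hRX
  haveI : Invertible (RX R B X) := (RX R B X).invertibleOfIsUnitDet hRXdet
  set T : Matrix (Fin n ⊕ Fin m) (Fin n ⊕ Fin m) ℝ := fromBlocks A B Sᵀ R with hT
  have eq1 : fromBlocks (1 : Matrix (Fin n) (Fin n) ℝ) 0 (Bᵀ * X) 1 * T
      = fromBlocks A B (SX A B S X)ᵀ (RX R B X) := by
    rw [hT, Matrix.fromBlocks_multiply, Matrix.fromBlocks_inj]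
    refine ⟨by simp, by simp, ?_, ?_⟩
    · simp [SX, Matrix.transpose_add, Matrix.transpose_mul, hXsym, Matrix.mul_assoc]
    · simp [RX, add_comm]
  have dT1 : T.det = (RX R B X).det * (AX A B S R X).det := by
    have h := congrArg Matrix.det eq1
    rw [Matrix.det_mul, Matrix.det_fromBlocks_zero₁₂] at h
    simp only [Matrix.det_one, one_mul] at h
    rw [h, Matrix.det_fromBlocks₂₂]
    congr 1
    rw [AX, KX, mpinv_of_isUnit hRX, invOf_eq_nonsing_inv, Matrix.mul_assoc]
  have eq2 : T * fromBlocks 1 0 (-(mpinv R * Sᵀ)) 1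
      = fromBlocks (A - B * mpinv R * Sᵀ) B 0 R := by
    rw [hT, Matrix.fromBlocks_multiply, Matrix.fromBlocks_inj]
    refine ⟨?_, by simp, ?_, by simp⟩
    · rw [Matrix.mul_one, Matrix.mul_neg, sub_eq_add_neg, Matrix.mul_assoc]
    · rw [Matrix.mul_one, Matrix.mul_neg, ← Matrix.mul_assoc, hRS, add_neg_cancel]
  have dT2 : T.det = (A - B * mpinv R * Sᵀ).det * R.det := by
    have h := congrArg Matrix.det eq2
    rw [Matrix.det_mul, Matrix.det_fromBlocks_zero₁₂, Matrix.det_fromBlocks_zero₂₁] at h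
    simp only [Matrix.det_one, one_mul, mul_one] at h
    exact h
  have hne : (RX R B X).det ≠ 0 := hRXdet.ne_zero
  constructor
  · intro h
    have h0 : (A - B * mpinv R * Sᵀ).det * R.det = 0 := by
      rw [← dT2, dT1, h, mul_zero]
    rcases mul_eq_zero.mp h0 with h' | h'
    · exact Or.inr h'
    · exact Or.inl h'
  · intro h
    have h0 : T.det = 0 := by
      rw [dT2]
      rcases h with h | h
      · rw [h, mul_zero]
      · rw [h, zero_mul]
    rw [dT1] at h0
    rcases mul_eq_zero.mp h0 with h' | h'
    · exact absurd h' hne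
    · exact h'

/-- if `X` solves CGDARE(Σ) with `R_X` invertible, then `A_X` is singular iff
`R` or `A - B R† Sᵀ` is singular. -/
theorem stmt_4 {n m : ℕ} (hn : 0 < n) (hm : 0 < m)
    (A Q : Matrix (Fin n) (Fin n) ℝ) (B S : Matrix (Fin n) (Fin m) ℝ)
    (R : Matrix (Fin m) (Fin m) ℝ)
    (hPi : (fromBlocks Q S Sᵀ R).PosSemidef)
    (X : Matrix (Fin n) (Fin n) ℝ) (hX : IsCGDARESolution A Q B S R X)
    (hRX : IsUnit (RX R B X)) :
    (AX A B S R X).det = 0 ↔ R.det = 0 ∨ (A - B * mpinv R * Sᵀ).det = 0 := by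
  exact stmt_4' hn hm A Q B S R hPi X hX.1 hRX
end

section
/- Let X = Xᵀ and Y = Yᵀ in ℝ^{n×n} satisfy ker R_X ⊆ ker S_X and ker R_Y ⊆ ker S_Y, and let Δ := X − Y. Then 𝔇(X) − 𝔇(Y) = Δ − A_Yᵀ Δ A_Y + A_Yᵀ Δ B R_X† Bᵀ Δ A_Y. -/
open Matrix

-- ===== auxiliary lemmas =====

lemma star_eq_transpose' {ι κ : Type*} (M : Matrix ι κ ℝ) : Mᴴ = Mᵀ := by
  ext i j; simp [Matrix.conjTranspose_apply]

lemma exists_penrose {ι : Type*} [Fintype ι] [DecidableEq ι]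
    (M : Matrix ι ι ℝ) (hM : Mᵀ = M) :
    ∃ P : Matrix ι ι ℝ,
      M * P * M = M ∧ P * M * P = P ∧ (M * P)ᵀ = M * P ∧ (P * M)ᵀ = P * M := by
  have hH : M.IsHermitian := by
    show Mᴴ = M
    rw [star_eq_transpose', hM]
  set V : Matrix ι ι ℝ := (hH.eigenvectorUnitary : Matrix ι ι ℝ) with hV
  set W : Matrix ι ι ℝ := star V with hWdef
  have hVW : V * W = 1 := Matrix.mem_unitaryGroup_iff.mp hH.eigenvectorUnitary.2
  have hWV : W * V = 1 := Matrix.mem_unitaryGroup_iff'.mp hH.eigenvectorUnitary.2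
  set e : ι → ℝ := RCLike.ofReal ∘ hH.eigenvalues with he
  set e' : ι → ℝ := fun i => (e i)⁻¹ with he'
  have hMspec : M = V * diagonal e * W := hH.spectral_theorem
  have hmul : ∀ f g : ι → ℝ,
      (V * diagonal f * W) * (V * diagonal g * W)
        = V * diagonal (fun i => f i * g i) * W := by
    intro f g
    have h1 : (V * diagonal f * W) * (V * diagonal g * W)
        = V * (diagonal f * ((W * V) * diagonal g)) * W := by noncomm_ring
    rw [h1, hWV, one_mul, diagonal_mul_diagonal]
  have hWT : W = Vᵀ := by rw [hWdef, ← star_eq_transpose']; rfl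
  have hsym : ∀ f : ι → ℝ, (V * diagonal f * W)ᵀ = V * diagonal f * W := by
    intro f
    rw [hWT]
    simp [Matrix.transpose_mul, Matrix.diagonal_transpose, mul_assoc]
  refine ⟨V * diagonal e' * W, ?_, ?_, ?_, ?_⟩
  · rw [hMspec, hmul, hmul]
    have : (fun i => (fun i => e i * e' i) i * e i) = e := by
      funext i
      rcases eq_or_ne (e i) 0 with h | h
      · simp [h, he']
      · simp only [he']
        rw [mul_inv_cancel₀ h, one_mul]
    rw [this]
  · rw [hMspec, hmul, hmul]
    have : (fun i => (fun i => e' i * e i) i * e' i) = e' := by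
      funext i
      rcases eq_or_ne (e i) 0 with h | h
      · simp [h, he']
      · simp only [he']
        rw [inv_mul_cancel₀ h, one_mul]
    rw [this]
  · rw [hMspec, hmul, hsym]
  · rw [hMspec, hmul, hsym]

lemma penrose_unique_s6 {ι : Type*} [Fintype ι] [DecidableEq ι]
    (M P P' : Matrix ι ι ℝ)
    (h1 : M * P * M = M) (h2 : P * M * P = P) (h3 : (M * P)ᵀ = M * P)
    (h4 : (P * M)ᵀ = P * M)
    (h1' : M * P' * M = M) (h2' : P' * M * P' = P') (h3' : (M * P')ᵀ = M * P')
    (h4' : (P' * M)ᵀ = P' * M) : P = P' := by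
  have c1 : M * P = M * P' := by
    calc M * P = (M * P)ᵀ := h3.symm
      _ = ((M * P' * M) * P)ᵀ := by rw [h1']
      _ = (M * P)ᵀ * (M * P')ᵀ := by
          rw [show M * P' * M * P = (M * P') * (M * P) from by noncomm_ring,
            Matrix.transpose_mul]
      _ = (M * P) * (M * P') := by rw [h3, h3']
      _ = (M * P * M) * P' := by noncomm_ring
      _ = M * P' := by rw [h1]
  have c2 : P * M = P' * M := by
    calc P * M = (P * M)ᵀ := h4.symm
      _ = (P * (M * P' * M))ᵀ := by rw [h1']
      _ = (P' * M)ᵀ * (P * M)ᵀ := by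
          rw [show P * (M * P' * M) = (P * M) * (P' * M) from by noncomm_ring,
            Matrix.transpose_mul]
      _ = (P' * M) * (P * M) := by rw [h4, h4']
      _ = P' * (M * P * M) := by noncomm_ring
      _ = P' * M := by rw [h1]
  calc P = P * M * P := h2.symm
    _ = P * (M * P') := by rw [mul_assoc, c1]
    _ = (P * M) * P' := by rw [mul_assoc]
    _ = P' * M * P' := by rw [c2]
    _ = P' := h2'



lemma mpinv_eqs {ι : Type*} [Fintype ι] [DecidableEq ι]
    (M : Matrix ι ι ℝ) (hM : Mᵀ = M) :
    M * mpinv M * M = M ∧ mpinv M * M * mpinv M = mpinv M ∧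
      (M * mpinv M)ᵀ = M * mpinv M ∧ (mpinv M * M)ᵀ = mpinv M * M := by
  have h := exists_penrose M hM
  rw [mpinv, dif_pos h]
  exact h.choose_spec

lemma mpinv_symm {ι : Type*} [Fintype ι] [DecidableEq ι]
    (M : Matrix ι ι ℝ) (hM : Mᵀ = M) : (mpinv M)ᵀ = mpinv M := by
  obtain ⟨e1, e2, e3, e4⟩ := mpinv_eqs M hM
  refine penrose_unique_s6 M _ _ ?_ ?_ ?_ ?_ e1 e2 e3 e4
  · calc M * (mpinv M)ᵀ * M = (Mᵀ * mpinv M * Mᵀ)ᵀ := by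
          simp [Matrix.transpose_mul, mul_assoc]
      _ = M := by rw [hM, e1, hM]
  · calc (mpinv M)ᵀ * M * (mpinv M)ᵀ = (mpinv M * Mᵀ * mpinv M)ᵀ := by
          simp [Matrix.transpose_mul, mul_assoc]
      _ = (mpinv M)ᵀ := by rw [hM, e2]
  · have : M * (mpinv M)ᵀ = (mpinv M * Mᵀ)ᵀ := by
      simp [Matrix.transpose_mul]
    rw [this, hM, e4]
    exact e4
  · have : (mpinv M)ᵀ * M = (Mᵀ * mpinv M)ᵀ := by
      simp [Matrix.transpose_mul]
    rw [this, hM, e3]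
    exact e3

lemma kernel_mpinv {ι κ : Type*} [Fintype ι] [Fintype κ] [DecidableEq κ]
    (M : Matrix κ κ ℝ) (hM : Mᵀ = M) (S1 : Matrix ι κ ℝ)
    (hker : ∀ v : κ → ℝ, M.mulVec v = 0 → S1.mulVec v = 0) :
    S1 * mpinv M * M = S1 := by
  obtain ⟨e1, _, _, _⟩ := mpinv_eqs M hM
  have h0 : M * (1 - mpinv M * M) = 0 := by
    rw [mul_sub, mul_one, ← mul_assoc, e1, sub_self]
  have hcol : ∀ j, M.mulVec (fun k => (1 - mpinv M * M) k j) = 0 := by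
    intro j
    funext i
    have := congrFun (congrFun h0 i) j
    simpa [Matrix.mul_apply, Matrix.mulVec, dotProduct] using this
  have h2 : S1 * (1 - mpinv M * M) = 0 := by
    ext i j
    have := congrFun (hker _ (hcol j)) i
    simpa [Matrix.mul_apply, Matrix.mulVec, dotProduct] using this
  rw [Matrix.mul_sub, Matrix.mul_one] at h2
  have := sub_eq_zero.mp h2
  rw [Matrix.mul_assoc]
  exact this.symm


lemma ricc_key {ι κ : Type*} [Fintype ι] [Fintype κ]
    (A Δ a : Matrix ι ι ℝ) (B P p : Matrix ι κ ℝ) (r ρ G GY : Matrix κ κ ℝ)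
    (K : Matrix κ ι ℝ)
    (hΔ : Δᵀ = Δ) (hr : rᵀ = r) (hρ : ρᵀ = ρ) (hG : Gᵀ = G) (hGY : GYᵀ = GY)
    (h1 : P * G * r = P) (h3 : r * G * r = r) (h2 : p * GY * ρ = p)
    (hR : Bᵀ * Δ * B = r - ρ) (hS : Aᵀ * Δ * B = P - p)
    (hK : K = GY * pᵀ) (ha : a = A - B * K) :
    P * G * Pᵀ - p * GY * pᵀ =
      Aᵀ * Δ * A - aᵀ * Δ * a + aᵀ * Δ * B * G * Bᵀ * Δ * a := by
  have hSt : Bᵀ * Δ * A = Pᵀ - pᵀ := by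
    have h := congrArg Matrix.transpose hS
    simp only [Matrix.transpose_mul, Matrix.transpose_sub, Matrix.transpose_transpose, hΔ] at h
    rw [← Matrix.mul_assoc] at h
    exact h
  have hKρ : ρ * (GY * pᵀ) = pᵀ := by
    have h := congrArg Matrix.transpose h2
    simp only [Matrix.transpose_mul, Matrix.transpose_transpose, hρ, hGY, Matrix.mul_assoc] at h
    exact h
  have h1t : r * G * Pᵀ = Pᵀ := by
    have h := congrArg Matrix.transpose h1
    simp only [Matrix.transpose_mul, hr, hG] at h
    rw [Matrix.mul_assoc]
    exact h
  have d1 : Bᵀ * Δ * a = Pᵀ - r * K := by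
    calc Bᵀ * Δ * a = Bᵀ * Δ * A - Bᵀ * Δ * B * K := by rw [ha]; simp only [Matrix.mul_sub, Matrix.sub_mul, Matrix.mul_assoc]; try abel
      _ = (Pᵀ - pᵀ) - (r - ρ) * K := by rw [hSt, hR]
      _ = Pᵀ - r * K - (pᵀ - ρ * K) := by simp only [Matrix.mul_sub, Matrix.sub_mul, Matrix.mul_assoc]; try abel
      _ = Pᵀ - r * K := by rw [hK, hKρ]; abel
  have d2 : aᵀ * Δ * B = P - Kᵀ * r := by
    have h : aᵀ * Δ * B = (Bᵀ * Δ * a)ᵀ := by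
      simp only [Matrix.transpose_mul, Matrix.transpose_transpose, hΔ, Matrix.mul_assoc]
    rw [h, d1]
    simp only [Matrix.transpose_sub, Matrix.transpose_mul, Matrix.transpose_transpose, hr]
  have e1 : aᵀ * Δ * a =
      Aᵀ * Δ * A - Kᵀ * Pᵀ + Kᵀ * pᵀ - P * K + Kᵀ * r * K := by
    calc aᵀ * Δ * a
        = Aᵀ * Δ * A - Kᵀ * (Bᵀ * Δ * A) - Aᵀ * Δ * B * K + Kᵀ * (Bᵀ * Δ * B) * K := by
          rw [ha]
          simp only [Matrix.transpose_sub, Matrix.transpose_mul]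
          simp only [Matrix.mul_sub, Matrix.sub_mul, Matrix.mul_assoc]; try abel
      _ = Aᵀ * Δ * A - Kᵀ * (Pᵀ - pᵀ) - (P - p) * K + Kᵀ * (r - ρ) * K := by
          rw [hSt, hS, hR]
      _ = Aᵀ * Δ * A - Kᵀ * Pᵀ + Kᵀ * pᵀ - P * K + Kᵀ * r * K + (p * K - Kᵀ * (ρ * K)) := by
          simp only [Matrix.mul_sub, Matrix.sub_mul, Matrix.mul_assoc]; try abel
      _ = Aᵀ * Δ * A - Kᵀ * Pᵀ + Kᵀ * pᵀ - P * K + Kᵀ * r * K := by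
          rw [hK]
          rw [show ρ * (GY * pᵀ) = pᵀ from hKρ]
          rw [show (GY * pᵀ)ᵀ * pᵀ = p * (GY * pᵀ) from by
            simp only [Matrix.transpose_mul, Matrix.transpose_transpose, hGY, Matrix.mul_assoc]]
          abel
  have e2 : aᵀ * Δ * B * G * Bᵀ * Δ * a =
      P * G * Pᵀ - P * K - Kᵀ * Pᵀ + Kᵀ * r * K := by
    calc aᵀ * Δ * B * G * Bᵀ * Δ * a = (aᵀ * Δ * B) * G * (Bᵀ * Δ * a) := by
          simp only [Matrix.mul_sub, Matrix.sub_mul, Matrix.mul_assoc]; try abel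
      _ = (P - Kᵀ * r) * G * (Pᵀ - r * K) := by rw [d2, d1]
      _ = P * G * Pᵀ - (P * G * r) * K - Kᵀ * (r * G * Pᵀ) + Kᵀ * ((r * G * r) * K) := by
          simp only [Matrix.mul_sub, Matrix.sub_mul, Matrix.mul_assoc]; try abel
      _ = P * G * Pᵀ - P * K - Kᵀ * Pᵀ + Kᵀ * (r * K) := by rw [h1, h1t, h3]
      _ = P * G * Pᵀ - P * K - Kᵀ * Pᵀ + Kᵀ * r * K := by simp only [Matrix.mul_sub, Matrix.sub_mul, Matrix.mul_assoc]; try abel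
  have e3 : p * GY * pᵀ = Kᵀ * pᵀ := by
    rw [hK]
    simp only [Matrix.transpose_mul, Matrix.transpose_transpose, hGY, Matrix.mul_assoc]
  rw [e1, e2, e3]
  abel

/-- `𝔇(X) - 𝔇(Y) = Δ - A_Yᵀ Δ A_Y + A_Yᵀ Δ B R_X† Bᵀ Δ A_Y` with `Δ = X - Y`. -/
theorem stmt_6 {n m : ℕ} (hn : 0 < n) (hm : 0 < m)
    (A Q : Matrix (Fin n) (Fin n) ℝ) (B S : Matrix (Fin n) (Fin m) ℝ)
    (R : Matrix (Fin m) (Fin m) ℝ)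
    (hPi : (fromBlocks Q S Sᵀ R).PosSemidef)
    (X Y : Matrix (Fin n) (Fin n) ℝ) (hX : Xᵀ = X) (hY : Yᵀ = Y)
    (hkX : KerCond A B S R X) (hkY : KerCond A B S R Y) :
    DOp A Q B S R X - DOp A Q B S R Y =
      (X - Y) - (AX A B S R Y)ᵀ * (X - Y) * AX A B S R Y +
        (AX A B S R Y)ᵀ * (X - Y) * B * mpinv (RX R B X) * Bᵀ * (X - Y) * AX A B S R Y := by
  have hRsym : Rᵀ = R := by
    ext i j
    have h := congrFun (congrFun hPi.1 (Sum.inr i)) (Sum.inr j)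
    simpa [Matrix.conjTranspose_apply, Matrix.fromBlocks_apply₂₂] using h
  have hrX : (RX R B X)ᵀ = RX R B X := by
    simp only [RX, Matrix.transpose_add, Matrix.transpose_mul, Matrix.transpose_transpose,
      hX, hRsym, Matrix.mul_assoc]
  have hrY : (RX R B Y)ᵀ = RX R B Y := by
    simp only [RX, Matrix.transpose_add, Matrix.transpose_mul, Matrix.transpose_transpose,
      hY, hRsym, Matrix.mul_assoc]
  have hG := mpinv_symm _ hrX
  have hGY := mpinv_symm _ hrY
  obtain ⟨e1X, -, -, -⟩ := mpinv_eqs _ hrX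
  have h1 := kernel_mpinv _ hrX _ hkX
  have h2 := kernel_mpinv _ hrY _ hkY
  have hD : (X - Y)ᵀ = X - Y := by rw [Matrix.transpose_sub, hX, hY]
  have hRd : Bᵀ * (X - Y) * B = RX R B X - RX R B Y := by
    simp only [RX, Matrix.mul_sub, Matrix.sub_mul]
    abel
  have hSd : Aᵀ * (X - Y) * B = SX A B S X - SX A B S Y := by
    simp only [SX, Matrix.mul_sub, Matrix.sub_mul]
    abel
  have E := ricc_key A (X - Y) (AX A B S R Y) B (SX A B S X) (SX A B S Y)
      (RX R B X) (RX R B Y) (mpinv (RX R B X)) (mpinv (RX R B Y)) (KX A B S R Y)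
      hD hrX hrY hG hGY h1 e1X h2 hRd hSd rfl rfl
  rw [show Aᵀ * (X - Y) * A = Aᵀ * X * A - Aᵀ * Y * A from by
    simp only [Matrix.mul_sub, Matrix.sub_mul]] at E
  have E3 : SX A B S Y * mpinv (RX R B Y) * (SX A B S Y)ᵀ
      = SX A B S X * mpinv (RX R B X) * (SX A B S X)ᵀ
        - (Aᵀ * X * A - Aᵀ * Y * A - (AX A B S R Y)ᵀ * (X - Y) * AX A B S R Y
           + (AX A B S R Y)ᵀ * (X - Y) * B * mpinv (RX R B X) * Bᵀ * (X - Y) * AX A B S R Y) := by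
    rw [← E]
    abel
  simp only [DOp]
  rw [E3]
  abel
end

section
/- Let X∘ be a symmetric solution of CGDARE(Σ) and let X_{t+1} = X_{t+1}ᵀ ∈ ℝ^{n×n} satisfy ker R_{X_{t+1}} ⊆ ker S_{X_{t+1}}. Define X_t := ℛ(X_{t+1}), Δ_{t+1} := X_{t+1} − X∘ and Δ_t := X_t − X∘. Then Δ_t = A_{X∘}ᵀ Δ_{t+1} A_{X∘} − A_{X∘}ᵀ Δ_{t+1} B (R + Bᵀ X_{t+1} B)† Bᵀ Δ_{t+1} A_{X∘}. -/
open Matrix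

lemma exists_symm_pinv {ι : Type*} [Fintype ι] [DecidableEq ι]
    (M : Matrix ι ι ℝ) (hM : Mᵀ = M) :
    ∃ P : Matrix ι ι ℝ,
      (M * P * M = M ∧ P * M * P = P ∧ (M * P)ᵀ = M * P ∧ (P * M)ᵀ = P * M) ∧ Pᵀ = P := by
  have hH : M.IsHermitian := by
    rw [Matrix.IsHermitian, Matrix.conjTranspose_eq_transpose_of_trivial, hM]
  set U : Matrix ι ι ℝ := (hH.eigenvectorUnitary : Matrix ι ι ℝ) with hU
  have hUU' : star U * U = 1 := by
    exact (Matrix.mem_unitaryGroup_iff').mp hH.eigenvectorUnitary.2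
  set d : ι → ℝ := RCLike.ofReal ∘ hH.eigenvalues with hd
  have hspec : M = U * diagonal d * star U := hH.spectral_theorem
  have key : ∀ f g : ι → ℝ, (U * diagonal f * star U) * (U * diagonal g * star U)
      = U * diagonal (fun i => f i * g i) * star U := by
    intro f g
    calc (U * diagonal f * star U) * (U * diagonal g * star U)
        = U * diagonal f * (star U * U) * (diagonal g * star U) := by
          simp only [Matrix.mul_assoc]
      _ = U * (diagonal f * diagonal g) * star U := by
          rw [hUU']; simp only [Matrix.mul_one, Matrix.mul_assoc]
      _ = U * diagonal (fun i => f i * g i) * star U := by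
          rw [Matrix.diagonal_mul_diagonal]
  have symm : ∀ f : ι → ℝ, (U * diagonal f * star U)ᵀ = U * diagonal f * star U := by
    intro f
    rw [← Matrix.conjTranspose_eq_transpose_of_trivial]
    simp only [Matrix.star_eq_conjTranspose, Matrix.conjTranspose_mul,
      Matrix.conjTranspose_conjTranspose, Matrix.diagonal_conjTranspose, star_trivial,
      Matrix.mul_assoc]
  refine ⟨U * diagonal (fun i => (d i)⁻¹) * star U, ⟨?_, ?_, ?_, ?_⟩, symm _⟩
  · rw [hspec, key, key]
    congr 2
    funext i
    rcases eq_or_ne (d i) 0 with h | h <;> field_simp [h]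
  · rw [hspec, key, key]
    congr 2
    funext i
    rcases eq_or_ne (d i) 0 with h | h <;> field_simp [h]
  · rw [hspec, key]; exact symm _
  · rw [hspec, key]; exact symm _


lemma pinv_unique {α β : Type*} [Fintype α] [Fintype β] {M : Matrix α β ℝ}
    {P₁ P₂ : Matrix β α ℝ}
    (h₁ : M * P₁ * M = M ∧ P₁ * M * P₁ = P₁ ∧ (M * P₁)ᵀ = M * P₁ ∧ (P₁ * M)ᵀ = P₁ * M)
    (h₂ : M * P₂ * M = M ∧ P₂ * M * P₂ = P₂ ∧ (M * P₂)ᵀ = M * P₂ ∧ (P₂ * M)ᵀ = P₂ * M) :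
    P₁ = P₂ := by
  obtain ⟨e1, e2, e3, e4⟩ := h₁
  obtain ⟨f1, f2, f3, f4⟩ := h₂
  have step1 : M * P₂ = (M * P₂) * (M * P₁) := by
    calc M * P₂ = (M * P₂)ᵀ := f3.symm
      _ = ((M * P₁) * (M * P₂))ᵀ := by
            rw [show (M * P₁) * (M * P₂) = (M * P₁ * M) * P₂ by simp only [Matrix.mul_assoc], e1]
      _ = (M * P₂)ᵀ * (M * P₁)ᵀ := Matrix.transpose_mul _ _
      _ = (M * P₂) * (M * P₁) := by rw [e3, f3]
  have key1 : P₁ * (M * P₂) = P₁ := by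
    calc P₁ * (M * P₂) = P₁ * ((M * P₂) * (M * P₁)) := by rw [← step1]
      _ = (P₁ * (M * P₂ * M)) * P₁ := by simp only [Matrix.mul_assoc]
      _ = (P₁ * M) * P₁ := by rw [f1]
      _ = P₁ := e2
  have step2 : P₁ * M = P₂ * M := by
    calc P₁ * M = (P₁ * M)ᵀ := e4.symm
      _ = ((P₁ * M) * (P₂ * M))ᵀ := by
            rw [show (P₁ * M) * (P₂ * M) = P₁ * (M * P₂ * M) by simp only [Matrix.mul_assoc], f1]
      _ = (P₂ * M)ᵀ * (P₁ * M)ᵀ := Matrix.transpose_mul _ _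
      _ = (P₂ * M) * (P₁ * M) := by rw [e4, f4]
      _ = P₂ * (M * P₁ * M) := by simp only [Matrix.mul_assoc]
      _ = P₂ * M := by rw [e1]
  calc P₁ = P₁ * (M * P₂) := key1.symm
    _ = (P₁ * M) * P₂ := by rw [Matrix.mul_assoc]
    _ = (P₂ * M) * P₂ := by rw [step2]
    _ = P₂ := f2

lemma mpinv_eq {α β : Type*} [Fintype α] [Fintype β] {M : Matrix α β ℝ} {P : Matrix β α ℝ}
    (h : M * P * M = M ∧ P * M * P = P ∧ (M * P)ᵀ = M * P ∧ (P * M)ᵀ = P * M) :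
    mpinv M = P := by
  have hex : ∃ P : Matrix β α ℝ,
      M * P * M = M ∧ P * M * P = P ∧ (M * P)ᵀ = M * P ∧ (P * M)ᵀ = P * M := ⟨P, h⟩
  rw [mpinv, dif_pos hex]
  exact pinv_unique hex.choose_spec h

lemma mpinv_symm_spec {ι : Type*} [Fintype ι] [DecidableEq ι]
    (M : Matrix ι ι ℝ) (hM : Mᵀ = M) :
    M * mpinv M * M = M ∧ (mpinv M)ᵀ = mpinv M := by
  obtain ⟨P, hP, hPs⟩ := exists_symm_pinv M hM
  rw [mpinv_eq hP]
  exact ⟨hP.1, hPs⟩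

-- generic expansion ("completion of squares") identity
lemma expand_ricc {ι κ : Type*} [Fintype ι] [Fintype κ]
    (A Q X T : Matrix ι ι ℝ) (B S : Matrix ι κ ℝ) (R : Matrix κ κ ℝ) (K : Matrix κ ι ℝ)
    (hX : Xᵀ = X) :
    Aᵀ * X * A - T + Q =
      (A - B * K)ᵀ * X * (A - B * K) + Q - S * K - Kᵀ * Sᵀ + Kᵀ * R * K +
        ((Aᵀ * X * B + S) * K + Kᵀ * (Aᵀ * X * B + S)ᵀ - Kᵀ * (R + Bᵀ * X * B) * K - T) := by
  simp only [Matrix.transpose_sub, Matrix.transpose_mul, Matrix.transpose_add,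
    Matrix.transpose_transpose, hX, Matrix.sub_mul, Matrix.mul_sub, Matrix.add_mul,
    Matrix.mul_add, Matrix.mul_assoc]
  abel

lemma kernel_matrix {ι κ : Type*} [Fintype ι] [Fintype κ] [DecidableEq κ]
    {Rx : Matrix κ κ ℝ} {Sx : Matrix ι κ ℝ}
    (hker : ∀ v, Rx.mulVec v = 0 → Sx.mulVec v = 0) {P : Matrix κ κ ℝ}
    (hP : Rx * P * Rx = Rx) : Sx * (P * Rx) = Sx := by
  ext i j
  have h1 : Rx.mulVec ((P * Rx).mulVec (Pi.single j 1) - Pi.single j 1) = 0 := by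
    rw [Matrix.mulVec_sub, Matrix.mulVec_mulVec, ← Matrix.mul_assoc, hP, sub_self]
  have h2 := hker _ h1
  rw [Matrix.mulVec_sub, sub_eq_zero] at h2
  have h3 : (Sx * (P * Rx)) *ᵥ Pi.single j 1 = Sx *ᵥ Pi.single j 1 := by
    rw [← Matrix.mulVec_mulVec]; exact h2
  have h4 := congrFun h3 i
  rw [Matrix.mulVec_single_one, Matrix.mulVec_single_one] at h4
  exact h4

/-- one-step difference identity for the generalised Riccati difference
equation: `Δ_t = A_{X∘}ᵀ Δ_{t+1} A_{X∘} - A_{X∘}ᵀ Δ_{t+1} B (R + BᵀX_{t+1}B)† Bᵀ Δ_{t+1} A_{X∘}`. -/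
theorem stmt_15 {n m : ℕ} (hn : 0 < n) (hm : 0 < m)
    (A Q : Matrix (Fin n) (Fin n) ℝ) (B S : Matrix (Fin n) (Fin m) ℝ)
    (R : Matrix (Fin m) (Fin m) ℝ)
    (hPi : (fromBlocks Q S Sᵀ R).PosSemidef)
    (Xo : Matrix (Fin n) (Fin n) ℝ) (hXo : IsCGDARESolution A Q B S R Xo)
    (X1 : Matrix (Fin n) (Fin n) ℝ) (hX1 : X1ᵀ = X1) (hk1 : KerCond A B S R X1) :
    Ricc A Q B S R X1 - Xo =
      (AX A B S R Xo)ᵀ * (X1 - Xo) * AX A B S R Xo -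
        (AX A B S R Xo)ᵀ * (X1 - Xo) * B * mpinv (R + Bᵀ * X1 * B) * Bᵀ *
          (X1 - Xo) * AX A B S R Xo := by
  obtain ⟨hXoT, hXoR, hkero⟩ := hXo
  have hPiT : (fromBlocks Q S Sᵀ R)ᵀ = fromBlocks Q S Sᵀ R := by
    rw [← Matrix.conjTranspose_eq_transpose_of_trivial]; exact hPi.1
  have hR : Rᵀ = R := by
    ext i j
    have h := congrFun (congrFun hPiT (Sum.inr i)) (Sum.inr j)
    simpa [Matrix.fromBlocks, Matrix.transpose_apply] using h
  have hgoal1 : R + Bᵀ * X1 * B = RX R B X1 := rfl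
  rw [hgoal1]
  set Ro := RX R B Xo with hRo_def
  set So := SX A B S Xo with hSo_def
  set R1 := RX R B X1 with hR1_def
  set S1 := SX A B S X1 with hS1_def
  set Po := mpinv Ro with hPo_def
  set P1 := mpinv R1 with hP1_def
  have hRoT : Roᵀ = Ro := by
    rw [hRo_def]
    simp [RX, Matrix.transpose_add, Matrix.transpose_mul, hXoT, Matrix.mul_assoc, hR]
  have hR1T : R1ᵀ = R1 := by
    rw [hR1_def]
    simp [RX, Matrix.transpose_add, Matrix.transpose_mul, hX1, Matrix.mul_assoc, hR]
  obtain ⟨hPoE, hPoS⟩ := mpinv_symm_spec Ro hRoT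
  obtain ⟨hP1E, hP1S⟩ := mpinv_symm_spec R1 hR1T
  rw [← hPo_def] at hPoE hPoS
  rw [← hP1_def] at hP1E hP1S
  have hko : So * (Po * Ro) = So := kernel_matrix hkero hPoE
  have hk1' : S1 * (P1 * R1) = S1 := kernel_matrix hk1 hP1E
  have hkob : Ro * (Po * Soᵀ) = Soᵀ := by
    have h := congrArg Matrix.transpose hko
    rw [Matrix.transpose_mul, Matrix.transpose_mul, hPoS, hRoT, Matrix.mul_assoc] at h
    exact h
  have hk1b : R1 * (P1 * S1ᵀ) = S1ᵀ := by
    have h := congrArg Matrix.transpose hk1'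
    rw [Matrix.transpose_mul, Matrix.transpose_mul, hP1S, hR1T, Matrix.mul_assoc] at h
    exact h
  have hAx : AX A B S R Xo = A - B * (Po * Soᵀ) := rfl
  rw [hAx]
  have hRicc1 : Ricc A Q B S R X1 = Aᵀ * X1 * A - S1 * P1 * S1ᵀ + Q := rfl
  have hRicco : Ricc A Q B S R Xo = Aᵀ * Xo * A - So * Po * Soᵀ + Q := rfl
  have hS1r : Aᵀ * X1 * B + S = S1 := rfl
  have hSor : Aᵀ * Xo * B + S = So := rfl
  have hR1r : R + Bᵀ * X1 * B = R1 := rfl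
  have hRor : R + Bᵀ * Xo * B = Ro := rfl
  set K := Po * Soᵀ with hK_def
  set Ao := A - B * K with hAo_def
  set W := K - P1 * S1ᵀ with hW_def
  set Δ := X1 - Xo with hΔ_def
  clear_value Ro So R1 S1 Po P1 K Ao W Δ
  have hΔT : Δᵀ = Δ := by rw [hΔ_def, Matrix.transpose_sub, hX1, hXoT]
  have hPS1 : (P1 * S1ᵀ)ᵀ = S1 * P1 := by
    rw [Matrix.transpose_mul, Matrix.transpose_transpose, hP1S]
  have hWT : Wᵀ = Kᵀ - S1 * P1 := by
    rw [hW_def, Matrix.transpose_sub, hPS1]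
  have hR1o : R1 = Ro + Bᵀ * Δ * B := by
    rw [hR1_def, hRo_def, hΔ_def]
    simp only [RX, Matrix.mul_sub, Matrix.sub_mul, Matrix.mul_assoc]
    abel
  have hSS : S1ᵀ = Soᵀ + Bᵀ * Δ * A := by
    rw [hS1_def, hSo_def, hΔ_def]
    simp only [SX, Matrix.transpose_add, Matrix.transpose_mul, Matrix.transpose_transpose,
      hX1, hXoT, Matrix.mul_sub, Matrix.sub_mul, Matrix.mul_assoc]
    abel
  have hF4 : R1 * W = -(Bᵀ * Δ * Ao) := by
    calc R1 * W = R1 * K - R1 * (P1 * S1ᵀ) := by rw [hW_def, Matrix.mul_sub]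
      _ = R1 * K - S1ᵀ := by rw [hk1b]
      _ = Ro * K + Bᵀ * Δ * B * K - S1ᵀ := by rw [hR1o, Matrix.add_mul]
      _ = Soᵀ + Bᵀ * Δ * (B * K) - (Soᵀ + Bᵀ * Δ * A) := by
          rw [hkob, hSS, Matrix.mul_assoc (Bᵀ * Δ) B K]
      _ = -(Bᵀ * Δ * A - Bᵀ * Δ * (B * K)) := by abel
      _ = -(Bᵀ * Δ * Ao) := by rw [hAo_def, Matrix.mul_sub]
  have h5 : Bᵀ * Δ * Ao = -(R1 * W) := by rw [hF4, neg_neg]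
  have h6 : Aoᵀ * Δ * B = -(Wᵀ * R1) := by
    have h := congrArg Matrix.transpose h5
    rw [Matrix.transpose_neg, Matrix.transpose_mul, Matrix.transpose_mul,
      Matrix.transpose_mul, hΔT, hR1T, Matrix.transpose_transpose, ← Matrix.mul_assoc] at h
    exact h
  have hRHS : Aoᵀ * Δ * B * P1 * Bᵀ * Δ * Ao = Wᵀ * R1 * W := by
    calc Aoᵀ * Δ * B * P1 * Bᵀ * Δ * Ao
        = (Aoᵀ * Δ * B) * P1 * (Bᵀ * Δ * Ao) := by simp only [Matrix.mul_assoc]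
      _ = (Wᵀ * R1) * P1 * (R1 * W) := by
          rw [h5, h6]
          simp only [Matrix.neg_mul, Matrix.mul_neg, neg_neg]
      _ = Wᵀ * (R1 * P1 * R1) * W := by simp only [Matrix.mul_assoc]
      _ = Wᵀ * R1 * W := by rw [hP1E, Matrix.mul_assoc]
  have hexp1 := expand_ricc A Q X1 (S1 * P1 * S1ᵀ) B S R K hX1
  have hexpo := expand_ricc A Q Xo (So * Po * Soᵀ) B S R K hXoT
  rw [hS1r, hR1r, ← hAo_def] at hexp1
  rw [hSor, hRor, ← hAo_def] at hexpo
  have hk1'' : S1 * P1 * R1 = S1 := by rw [Matrix.mul_assoc]; exact hk1'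
  have hk1c : ∀ Z : Matrix (Fin m) (Fin n) ℝ, S1 * (P1 * (R1 * Z)) = S1 * Z := by
    intro Z
    rw [← Matrix.mul_assoc, ← Matrix.mul_assoc, hk1'']
  have hE1 : S1 * K + Kᵀ * S1ᵀ - Kᵀ * R1 * K - S1 * P1 * S1ᵀ = -(Wᵀ * R1 * W) := by
    have hexpW : Wᵀ * R1 * W
        = Kᵀ * (R1 * K) - Kᵀ * S1ᵀ - S1 * K + S1 * (P1 * S1ᵀ) := by
      calc Wᵀ * R1 * W = (Kᵀ - S1 * P1) * R1 * (K - P1 * S1ᵀ) := by rw [hWT, hW_def]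
        _ = Kᵀ * (R1 * K) - Kᵀ * (R1 * (P1 * S1ᵀ)) - S1 * (P1 * (R1 * K))
              + S1 * (P1 * (R1 * (P1 * S1ᵀ))) := by
            simp only [Matrix.sub_mul, Matrix.mul_sub, Matrix.mul_assoc]
            abel
        _ = Kᵀ * (R1 * K) - Kᵀ * S1ᵀ - S1 * K + S1 * (P1 * S1ᵀ) := by
            rw [hk1b, hk1c]
    rw [hexpW]
    simp only [Matrix.mul_assoc]
    abel
  have hEo : So * K + Kᵀ * Soᵀ - Kᵀ * Ro * K - So * Po * Soᵀ = 0 := by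
    have hKT : Kᵀ = So * Po := by
      rw [hK_def, Matrix.transpose_mul, Matrix.transpose_transpose, hPoS]
    have e1 : So * K = So * Po * Soᵀ := by rw [Matrix.mul_assoc, ← hK_def]
    have e2 : Kᵀ * Soᵀ = So * Po * Soᵀ := by rw [hKT]
    have e3 : Kᵀ * Ro * K = So * Po * Soᵀ := by
      calc Kᵀ * Ro * K = So * Po * Ro * K := by rw [hKT]
        _ = So * K := by rw [Matrix.mul_assoc So Po Ro, hko]
        _ = So * Po * Soᵀ := e1
    rw [e1, e2, e3]
    abel
  have hQuad : Aoᵀ * X1 * Ao - Aoᵀ * Xo * Ao = Aoᵀ * Δ * Ao := by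
    rw [hΔ_def]
    simp only [Matrix.mul_sub, Matrix.sub_mul]
  have hXo2 : Xo = Aᵀ * Xo * A - So * Po * Soᵀ + Q := hXoR.trans hRicco
  rw [hRicc1, hRHS, hexp1, hXo2, hexpo, hE1, hEo, ← hQuad]
  abel
end
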